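/- Let X be the positive semidefinite solution of the Lyapunov equation A X + X A* + C C* = 0 and let X̃ be a Hermitian approximation with X̃₊ its positive semidefinite part (keeping only nonnegative eigenvalues). Set R = A X̃ + X̃ A* + C C* and R₊ = A X̃₊ + X̃₊ A* + C C*. Then ‖R₊‖_F ≤ ‖R‖_F + 2‖A‖₂ ‖X − X̃‖_F. -/

import Mathlib

open Matrix
open scoped ComplexOrder

noncomputable def frobNorm {m n : Type*} [Fintype m] [Fintype n] (M : Matrix m n ℂ) : ℝ :=
  Real.sqrt (∑ i, ∑ j, ‖M i j‖ ^ 2)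

noncomputable def specNorm {m n : Type*} [Fintype m] [Fintype n] [DecidableEq n]
    (M : Matrix m n ℂ) : ℝ :=
  ‖LinearMap.toContinuousLinearMap (Matrix.toEuclideanLin M)‖

attribute [local instance] Matrix.frobeniusNormedAddCommGroup

lemma frobNorm_eq_norm {m n : Type*} [Fintype m] [Fintype n] (M : Matrix m n ℂ) :
    frobNorm M = ‖M‖ := by
  rw [Matrix.frobenius_norm_def, frobNorm, Real.sqrt_eq_rpow]
  congr 1
  refine Finset.sum_congr rfl fun i _ => Finset.sum_congr rfl fun j _ => ?_
  rw [← Real.rpow_natCast]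
  norm_num

lemma frobNorm_nonneg {m n : Type*} [Fintype m] [Fintype n] (M : Matrix m n ℂ) :
    0 ≤ frobNorm M := Real.sqrt_nonneg _

lemma sumsq_nonneg {m n : Type*} [Fintype m] [Fintype n] (M : Matrix m n ℂ) :
    0 ≤ ∑ i, ∑ j, ‖M i j‖ ^ 2 := by positivity

lemma frobNorm_sq {m n : Type*} [Fintype m] [Fintype n] (M : Matrix m n ℂ) :
    frobNorm M ^ 2 = ∑ i, ∑ j, ‖M i j‖ ^ 2 := Real.sq_sqrt (sumsq_nonneg M)

lemma mulVec_norm_le {n : ℕ} (A : Matrix (Fin n) (Fin n) ℂ) (v : Fin n → ℂ) :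
    Real.sqrt (∑ i, ‖(A *ᵥ v) i‖ ^ 2) ≤ specNorm A * Real.sqrt (∑ i, ‖v i‖ ^ 2) := by
  have h1 := (LinearMap.toContinuousLinearMap (Matrix.toEuclideanLin A)).le_opNorm
    ((WithLp.equiv 2 (Fin n → ℂ)).symm v)
  have h2 : (LinearMap.toContinuousLinearMap (Matrix.toEuclideanLin A))
      ((WithLp.equiv 2 (Fin n → ℂ)).symm v) = (WithLp.equiv 2 (Fin n → ℂ)).symm (A *ᵥ v) := by
    simp [LinearMap.coe_toContinuousLinearMap']
  rw [h2, EuclideanSpace.norm_eq, EuclideanSpace.norm_eq] at h1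
  simp only [WithLp.equiv_symm_apply, PiLp.toLp_apply] at h1
  exact h1

lemma specNorm_nonneg {n : ℕ} (A : Matrix (Fin n) (Fin n) ℂ) : 0 ≤ specNorm A :=
  norm_nonneg _

lemma frobNorm_mul_le {n : ℕ} (A M : Matrix (Fin n) (Fin n) ℂ) :
    frobNorm (A * M) ≤ specNorm A * frobNorm M := by
  have hcol : ∀ j, ∑ i, ‖(A * M) i j‖ ^ 2 ≤ specNorm A ^ 2 * ∑ i, ‖M i j‖ ^ 2 := by
    intro j
    have h := mulVec_norm_le A (fun k => M k j)
    have hA : (A *ᵥ fun k => M k j) = fun i => (A * M) i j := by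
      funext i; simp [Matrix.mulVec, Matrix.mul_apply, dotProduct]
    rw [hA] at h
    have := mul_le_mul h h (Real.sqrt_nonneg _) (mul_nonneg (specNorm_nonneg A) (Real.sqrt_nonneg _))
    rw [Real.mul_self_sqrt (by positivity)] at this
    calc ∑ i, ‖(A * M) i j‖ ^ 2 ≤ (specNorm A * Real.sqrt (∑ i, ‖M i j‖ ^ 2)) *
          (specNorm A * Real.sqrt (∑ i, ‖M i j‖ ^ 2)) := this
      _ = specNorm A ^ 2 * ∑ i, ‖M i j‖ ^ 2 := by
          rw [mul_mul_mul_comm, Real.mul_self_sqrt (by positivity)]; ring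
  have hswap : ∑ i, ∑ j, ‖(A * M) i j‖ ^ 2 = ∑ j, ∑ i, ‖(A * M) i j‖ ^ 2 :=
    Finset.sum_comm
  have hle : ∑ i, ∑ j, ‖(A * M) i j‖ ^ 2 ≤ specNorm A ^ 2 * ∑ i, ∑ j, ‖M i j‖ ^ 2 := by
    rw [hswap, Finset.mul_sum]
    calc ∑ j, ∑ i, ‖(A * M) i j‖ ^ 2 ≤ ∑ j, specNorm A ^ 2 * ∑ i, ‖M i j‖ ^ 2 :=
          Finset.sum_le_sum fun j _ => hcol j
      _ = ∑ i, specNorm A ^ 2 * ∑ j, ‖M j i‖ ^ 2 := by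
          congr 1
      _ = _ := by rw [← Finset.mul_sum, ← Finset.mul_sum]; rw [Finset.sum_comm]
  have := Real.sqrt_le_sqrt hle
  rw [Real.sqrt_mul (by positivity), Real.sqrt_sq (specNorm_nonneg A)] at this
  exact this

lemma frobNorm_conjT {m n : Type*} [Fintype m] [Fintype n] (M : Matrix m n ℂ) :
    frobNorm Mᴴ = frobNorm M := by
  rw [frobNorm_eq_norm, frobNorm_eq_norm, Matrix.frobenius_norm_conjTranspose]

lemma frobNorm_mul_conjT_le {n : ℕ} (A M : Matrix (Fin n) (Fin n) ℂ) :
    frobNorm (M * Aᴴ) ≤ specNorm A * frobNorm M := by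
  have h : M * Aᴴ = (A * Mᴴ)ᴴ := by simp [Matrix.conjTranspose_mul]
  rw [h, frobNorm_conjT]
  calc frobNorm (A * Mᴴ) ≤ specNorm A * frobNorm Mᴴ := frobNorm_mul_le A Mᴴ
    _ = specNorm A * frobNorm M := by rw [frobNorm_conjT]

lemma sumsq_eq_trace {n : ℕ} (M : Matrix (Fin n) (Fin n) ℂ) :
    ∑ i, ∑ j, ‖M i j‖ ^ 2 = ((Mᴴ * M).trace).re := by
  rw [Matrix.trace, Finset.sum_comm (s := Finset.univ)]
  rw [Complex.re_sum]
  refine Finset.sum_congr rfl fun j _ => ?_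
  rw [Matrix.diag_apply, Matrix.mul_apply, Complex.re_sum]
  refine Finset.sum_congr rfl fun i _ => ?_
  rw [Matrix.conjTranspose_apply]
  have : star (M i j) * M i j = ((‖M i j‖ ^ 2 : ℝ) : ℂ) := by
    rw [Complex.star_def, mul_comm, Complex.mul_conj]
    norm_cast
    rw [Complex.normSq_eq_norm_sq]
  rw [this, Complex.ofReal_re]

lemma frobNorm_unitary {n : ℕ} (U M : Matrix (Fin n) (Fin n) ℂ)
    (hU : U ∈ Matrix.unitaryGroup (Fin n) ℂ) :
    frobNorm (U * M * Uᴴ) = frobNorm M := by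
  have h1 : Uᴴ * U = 1 := by
    have := Matrix.mem_unitaryGroup_iff'.mp hU
    rwa [Matrix.star_eq_conjTranspose] at this
  unfold frobNorm
  rw [sumsq_eq_trace, sumsq_eq_trace]
  congr 2
  have hH : (U * M * Uᴴ)ᴴ = U * Mᴴ * Uᴴ := by
    simp [Matrix.conjTranspose_mul, Matrix.mul_assoc]
  rw [hH]
  have : U * Mᴴ * Uᴴ * (U * M * Uᴴ) = U * (Mᴴ * M) * Uᴴ := by
    simp only [Matrix.mul_assoc, ← Matrix.mul_assoc Uᴴ U, h1, Matrix.one_mul]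
  rw [this, Matrix.trace_mul_comm, ← Matrix.mul_assoc, h1, Matrix.one_mul]

lemma psd_diag_re_nonneg {n : ℕ} {Y : Matrix (Fin n) (Fin n) ℂ} (hY : Y.PosSemidef)
    (i : Fin n) : 0 ≤ Y i i := by
  have h := (posSemidef_iff_dotProduct_mulVec.mp hY).2 (Pi.single i 1)
  have heq : star (Pi.single i 1 : Fin n → ℂ) ⬝ᵥ (Y *ᵥ Pi.single i 1) = Y i i := by
    simp [dotProduct, Matrix.mulVec, Pi.single_apply, apply_ite,
      Finset.sum_ite_eq', Finset.sum_ite_eq]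
  rwa [heq] at h

lemma key_diag_le {n : ℕ} (Y : Matrix (Fin n) (Fin n) ℂ) (hY : Y.PosSemidef)
    (lam : Fin n → ℝ) :
    frobNorm (Matrix.diagonal fun i => ((max (lam i) 0 - lam i : ℝ) : ℂ))
      ≤ frobNorm (Y - Matrix.diagonal fun i => (lam i : ℂ)) := by
  apply Real.sqrt_le_sqrt
  have hL : ∀ i : Fin n, ∑ j, ‖(Matrix.diagonal fun k => ((max (lam k) 0 - lam k : ℝ) : ℂ)) i j‖ ^ 2
      = (max (lam i) 0 - lam i) ^ 2 := by
    intro i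
    rw [Finset.sum_eq_single i]
    · rw [Matrix.diagonal_apply_eq, Complex.norm_real, Real.norm_eq_abs, sq_abs]
    · intro j _ hj
      simp [Matrix.diagonal_apply_ne' _ hj]
    · simp
  have hterm : ∀ i : Fin n, (max (lam i) 0 - lam i) ^ 2
      ≤ ‖(Y - Matrix.diagonal fun k => (lam k : ℂ)) i i‖ ^ 2 := by
    intro i
    have hdiag : 0 ≤ Y i i := psd_diag_re_nonneg hY i
    have hre : 0 ≤ (Y i i).re := by
      have := Complex.le_def.mp hdiag
      simpa using this.1
    have hz : (Y - Matrix.diagonal fun k => (lam k : ℂ)) i i = Y i i - (lam i : ℂ) := by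
      simp [Matrix.sub_apply, Matrix.diagonal_apply_eq]
    rw [hz]
    have h1 : max (lam i) 0 - lam i ≤ |(Y i i - (lam i : ℂ)).re| := by
      have hre' : (Y i i - (lam i : ℂ)).re = (Y i i).re - lam i := by simp
      rw [hre']
      rcases le_or_gt (lam i) 0 with h | h
      · rw [max_eq_right h]
        calc 0 - lam i = -lam i := by ring
          _ ≤ (Y i i).re - lam i := by linarith
          _ ≤ |(Y i i).re - lam i| := le_abs_self _
      · rw [max_eq_left h.le]
        calc lam i - lam i = 0 := by ring
          _ ≤ |(Y i i).re - lam i| := abs_nonneg _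
    have h2 : |(Y i i - (lam i : ℂ)).re| ≤ ‖Y i i - (lam i : ℂ)‖ :=
      Complex.abs_re_le_norm _
    have h3 : max (lam i) 0 - lam i ≤ ‖Y i i - (lam i : ℂ)‖ := h1.trans h2
    have h0 : 0 ≤ max (lam i) 0 - lam i := by
      rcases le_or_gt (lam i) 0 with h | h
      · rw [max_eq_right h]; linarith
      · rw [max_eq_left h.le]; linarith
    exact pow_le_pow_left₀ h0 h3 2
  calc ∑ i, ∑ j, ‖(Matrix.diagonal fun k => ((max (lam k) 0 - lam k : ℝ) : ℂ)) i j‖ ^ 2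
      = ∑ i, (max (lam i) 0 - lam i) ^ 2 := Finset.sum_congr rfl fun i _ => hL i
    _ ≤ ∑ i, ‖(Y - Matrix.diagonal fun k => (lam k : ℂ)) i i‖ ^ 2 :=
        Finset.sum_le_sum fun i _ => hterm i
    _ ≤ ∑ i, ∑ j, ‖(Y - Matrix.diagonal fun k => (lam k : ℂ)) i j‖ ^ 2 :=
        Finset.sum_le_sum fun i _ =>
          Finset.single_le_sum
            (f := fun j => ‖(Y - Matrix.diagonal fun k => (lam k : ℂ)) i j‖ ^ 2)
            (fun j _ => by positivity) (Finset.mem_univ i)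

lemma frobNorm_add_le {m k : Type*} [Fintype m] [Fintype k] (M N : Matrix m k ℂ) :
    frobNorm (M + N) ≤ frobNorm M + frobNorm N := by
  rw [frobNorm_eq_norm, frobNorm_eq_norm, frobNorm_eq_norm]
  exact norm_add_le M N

/-- If `X` is the PSD solution of the Lyapunov equation `A X + X A* + C C* = 0`, `X̃` is a
Hermitian approximation and `X̃₊` its PSD part, then the residual of `X̃₊` satisfies
`‖R₊‖_F ≤ ‖R‖_F + 2 ‖A‖₂ ‖X − X̃‖_F`. -/
theorem psd_part_residual_bound {n s : ℕ}
    (A : Matrix (Fin n) (Fin n) ℂ) (C : Matrix (Fin n) (Fin s) ℂ)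
    (X Xt Xp : Matrix (Fin n) (Fin n) ℂ)
    (hX : X.PosSemidef) (hLyap : A * X + X * Aᴴ + C * Cᴴ = 0)
    (hXt : Xt.IsHermitian)
    (U : Matrix (Fin n) (Fin n) ℂ) (hU : U ∈ Matrix.unitaryGroup (Fin n) ℂ)
    (lam : Fin n → ℝ)
    (hdec : Xt = U * Matrix.diagonal (fun i => (lam i : ℂ)) * Uᴴ)
    (hXp : Xp = U * Matrix.diagonal (fun i => ((max (lam i) 0 : ℝ) : ℂ)) * Uᴴ) :
    frobNorm (A * Xp + Xp * Aᴴ + C * Cᴴ)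
      ≤ frobNorm (A * Xt + Xt * Aᴴ + C * Cᴴ) + 2 * specNorm A * frobNorm (X - Xt) := by
  have hUU : U * Uᴴ = 1 := by
    have := Matrix.mem_unitaryGroup_iff.mp hU
    rwa [Matrix.star_eq_conjTranspose] at this
  set D := Xp - Xt with hD
  have hdiagsub : Matrix.diagonal (fun i => ((max (lam i) 0 - lam i : ℝ) : ℂ))
      = Matrix.diagonal (fun i => ((max (lam i) 0 : ℝ) : ℂ))
        - Matrix.diagonal (fun i => (lam i : ℂ)) := by
    have hfun : (fun i => ((max (lam i) 0 - lam i : ℝ) : ℂ))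
        = fun i => ((max (lam i) 0 : ℝ) : ℂ) - ((lam i : ℝ) : ℂ) := by
      funext i; push_cast; ring
    rw [hfun, Matrix.diagonal_sub]
  have hDdiag : D = U * (Matrix.diagonal fun i => ((max (lam i) 0 - lam i : ℝ) : ℂ)) * Uᴴ := by
    rw [hD, hXp, hdec, hdiagsub, Matrix.mul_sub, Matrix.sub_mul]
  have hXid : U * (Uᴴ * X * U) * Uᴴ = X := by
    simp only [← Matrix.mul_assoc, hUU, Matrix.one_mul]
    rw [Matrix.mul_assoc, hUU, Matrix.mul_one]
  have hXXt : X - Xt = U * (Uᴴ * X * U - Matrix.diagonal fun i => (lam i : ℂ)) * Uᴴ := by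
    rw [hdec, Matrix.mul_sub, Matrix.sub_mul, hXid]
  have hYps : (Uᴴ * X * U).PosSemidef := hX.conjTranspose_mul_mul_same U
  have hDle : frobNorm D ≤ frobNorm (X - Xt) := by
    rw [hDdiag, frobNorm_unitary _ _ hU, hXXt, frobNorm_unitary _ _ hU]
    exact key_diag_le _ hYps lam
  have hsplit : A * Xp + Xp * Aᴴ + C * Cᴴ
      = (A * Xt + Xt * Aᴴ + C * Cᴴ) + (A * D + D * Aᴴ) := by
    rw [hD]; noncomm_ring
  have hAD : frobNorm (A * D) ≤ specNorm A * frobNorm D := frobNorm_mul_le A D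
  have hDA : frobNorm (D * Aᴴ) ≤ specNorm A * frobNorm D := frobNorm_mul_conjT_le A D
  have hspec : 0 ≤ specNorm A := specNorm_nonneg A
  calc frobNorm (A * Xp + Xp * Aᴴ + C * Cᴴ)
      = frobNorm ((A * Xt + Xt * Aᴴ + C * Cᴴ) + (A * D + D * Aᴴ)) := by rw [hsplit]
    _ ≤ frobNorm (A * Xt + Xt * Aᴴ + C * Cᴴ) + frobNorm (A * D + D * Aᴴ) :=
        frobNorm_add_le _ _
    _ ≤ frobNorm (A * Xt + Xt * Aᴴ + C * Cᴴ) + (frobNorm (A * D) + frobNorm (D * Aᴴ)) := by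
        have := frobNorm_add_le (A * D) (D * Aᴴ); linarith
    _ ≤ frobNorm (A * Xt + Xt * Aᴴ + C * Cᴴ) + 2 * specNorm A * frobNorm (X - Xt) := by
        nlinarith [frobNorm_nonneg D, frobNorm_nonneg (X - Xt)]
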